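/- Let X be an n×n complex matrix consisting of a single Jordan block with eigenvalue λ. Then the orbits of the centralizer group G^X = {g ∈ GL_n(ℂ) : gX = Xg} acting on ℂ^n are exactly the zero orbit together with the sets {v ∈ ℂ^n : (X - λ)^k v ≠ 0 and (X - λ)^{k+1} v = 0} for k = 0, 1, ..., n-1. In particular, G^X acts on ℂ^n with finitely many orbits. -/

import Mathlib

open Matrix Finset

noncomputable def jb (n : ℕ) : Matrix (Fin n) (Fin n) ℂ :=
  Matrix.of fun r s => if (s : ℕ) = (r : ℕ) + 1 then 1 else 0

noncomputable def coeffs (v w : ℕ → ℂ) (k : ℕ) : ℕ → ℂ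
  | m => (w (k - m) - ∑ j ∈ (Finset.range m).attach,
      coeffs v w k j * v (k - m + (j : ℕ))) / v k
  termination_by m => m
  decreasing_by exact Finset.mem_range.mp j.2

lemma coeffs_spec (v w : ℕ → ℂ) (k : ℕ) (hv : v k ≠ 0) (m : ℕ) (hm : m ≤ k) :
    ∑ j ∈ Finset.range (m + 1), coeffs v w k j * v (k - m + j) = w (k - m) := by
  rw [Finset.sum_range_succ, coeffs]
  rw [Finset.sum_attach (Finset.range m) (fun j => coeffs v w k j * v (k - m + j))]
  rw [Nat.sub_add_cancel hm, div_mul_cancel₀ _ hv]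
  ring

lemma jb_pow_apply (n k : ℕ) (r s : Fin n) :
    (jb n ^ k) r s = if (s : ℕ) = (r : ℕ) + k then 1 else 0 := by
  induction k generalizing r s with
  | zero =>
    simp only [pow_zero, Matrix.one_apply, Nat.add_zero]
    congr 1
    simp [eq_comm, Fin.ext_iff]
  | succ k ih =>
    rw [pow_succ, Matrix.mul_apply]
    by_cases h : (r : ℕ) + k < n
    · have : ∀ t : Fin n, (jb n ^ k) r t * jb n t s =
        if t = (⟨(r : ℕ) + k, h⟩ : Fin n) then
          (if (s : ℕ) = (r : ℕ) + (k + 1) then 1 else 0) else 0 := by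
        intro t
        rw [ih, jb]
        by_cases ht : t = (⟨(r : ℕ) + k, h⟩ : Fin n)
        · subst ht; simp [Nat.add_assoc]
        · have : (t : ℕ) ≠ (r : ℕ) + k := by
            simpa [Fin.ext_iff] using ht
          simp [this, ht]
      rw [Finset.sum_congr rfl (fun t _ => this t), Finset.sum_ite_eq']
      simp
    · have h2 : ∀ t : Fin n, (jb n ^ k) r t * jb n t s = 0 := by
        intro t
        rw [ih]
        have : (t : ℕ) ≠ (r : ℕ) + k := by omega
        simp [this]
      rw [Finset.sum_congr rfl (fun t _ => h2 t), Finset.sum_const_zero]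
      have : (s : ℕ) ≠ (r : ℕ) + (k + 1) := by omega
      simp [this]

lemma jb_pow_mulVec (n k : ℕ) (v : Fin n → ℂ) (r : Fin n) :
    ((jb n ^ k) *ᵥ v) r = if h : (r : ℕ) + k < n then v ⟨(r : ℕ) + k, h⟩ else 0 := by
  rw [Matrix.mulVec, dotProduct]
  by_cases h : (r : ℕ) + k < n
  · have : ∀ t : Fin n, (jb n ^ k) r t * v t =
        if t = (⟨(r : ℕ) + k, h⟩ : Fin n) then v ⟨(r : ℕ) + k, h⟩ else 0 := by
      intro t
      rw [jb_pow_apply]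
      by_cases ht : t = (⟨(r : ℕ) + k, h⟩ : Fin n)
      · subst ht; simp
      · have : (t : ℕ) ≠ (r : ℕ) + k := by simpa [Fin.ext_iff] using ht
        simp [this, ht]
    rw [Finset.sum_congr rfl (fun t _ => this t), Finset.sum_ite_eq']
    simp [h]
  · have h2 : ∀ t : Fin n, (jb n ^ k) r t * v t = 0 := by
      intro t
      rw [jb_pow_apply]
      have : (t : ℕ) ≠ (r : ℕ) + k := by omega
      simp [this]
    rw [Finset.sum_congr rfl (fun t _ => h2 t), Finset.sum_const_zero]
    simp [h]

lemma jb_kernel_char (n k : ℕ) (v : Fin n → ℂ) :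
    (jb n ^ (k + 1)) *ᵥ v = 0 ↔ ∀ j : Fin n, k < (j : ℕ) → v j = 0 := by
  constructor
  · intro h j hj
    have hr : (j : ℕ) - (k + 1) + (k + 1) = (j : ℕ) := by omega
    have hlt : (j : ℕ) - (k + 1) < n := by omega
    have := congrFun h (⟨(j : ℕ) - (k + 1), hlt⟩ : Fin n)
    rw [jb_pow_mulVec] at this
    simp only [hr] at this
    rw [dif_pos j.2] at this
    simpa using this
  · intro h
    funext r
    rw [jb_pow_mulVec]
    by_cases hr : (r : ℕ) + (k + 1) < n
    · rw [dif_pos hr]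
      simp only [Pi.zero_apply]
      exact h ⟨(r : ℕ) + (k + 1), hr⟩ (by simp; omega)
    · rw [dif_neg hr]; simp

lemma jb_mem_char (n : ℕ) (k : Fin n) (v : Fin n → ℂ) :
    ((jb n ^ (k : ℕ)) *ᵥ v ≠ 0 ∧ (jb n ^ ((k : ℕ) + 1)) *ᵥ v = 0) ↔
      (v k ≠ 0 ∧ ∀ j : Fin n, (k : ℕ) < (j : ℕ) → v j = 0) := by
  rw [jb_kernel_char, and_congr_left_iff]
  intro htail
  rw [not_iff_not.symm, not_not, not_not]
  constructor
  · intro h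
    have h0 : (0 : ℕ) + (k : ℕ) < n := by simpa using k.2
    have := congrFun h (⟨0, k.pos⟩ : Fin n)
    rw [jb_pow_mulVec] at this
    simp only [dif_pos h0] at this
    have hk : (⟨(0 : ℕ) + (k : ℕ), h0⟩ : Fin n) = k := by simp [Fin.ext_iff]
    rw [hk] at this
    simpa using this
  · intro h
    funext r
    rw [jb_pow_mulVec]
    by_cases hr : (r : ℕ) + (k : ℕ) < n
    · rw [dif_pos hr]
      by_cases h0 : (r : ℕ) = 0
      · have : (⟨(r : ℕ) + (k : ℕ), hr⟩ : Fin n) = k := by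
          simp [Fin.ext_iff, h0]
        rw [this, h]; rfl
      · simp only [Pi.zero_apply]
        exact htail ⟨(r : ℕ) + (k : ℕ), hr⟩ (by simp; omega)
    · rw [dif_neg hr]; simp

lemma exists_g (n : ℕ) (k : Fin n) (v w : Fin n → ℂ)
    (hvk : v k ≠ 0) (hvt : ∀ j : Fin n, (k : ℕ) < (j : ℕ) → v j = 0)
    (hwk : w k ≠ 0) (hwt : ∀ j : Fin n, (k : ℕ) < (j : ℕ) → w j = 0) :
    ∃ g : GL (Fin n) ℂ,
      (↑g : Matrix (Fin n) (Fin n) ℂ) * jb n = jb n * (↑g : Matrix (Fin n) (Fin n) ℂ) ∧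
      (↑g : Matrix (Fin n) (Fin n) ℂ) *ᵥ v = w := by
  classical
  set v' : ℕ → ℂ := fun j => if h : j < n then v ⟨j, h⟩ else 0 with hv'
  set w' : ℕ → ℂ := fun j => if h : j < n then w ⟨j, h⟩ else 0 with hw'
  have hv'k : v' ((k : ℕ)) = v k := by simp [hv', k.2]
  have hw'k : w' ((k : ℕ)) = w k := by simp [hw', k.2]
  have hv'ne : v' ((k : ℕ)) ≠ 0 := by rw [hv'k]; exact hvk
  have hv't : ∀ m : ℕ, (k : ℕ) < m → v' m = 0 := by
    intro m hm
    by_cases h : m < n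
    · simp only [hv', dif_pos h]; exact hvt ⟨m, h⟩ hm
    · simp [hv', h]
  set c : ℕ → ℂ := coeffs v' w' (k : ℕ) with hc
  have hc0 : c 0 = w k / v k := by
    rw [hc, coeffs]
    simp [hv'k, hw'k]
  have hc0ne : c 0 ≠ 0 := by
    rw [hc0]
    exact div_ne_zero hwk hvk
  set G : Matrix (Fin n) (Fin n) ℂ := ∑ j ∈ Finset.range n, c j • jb n ^ j with hG
  -- entries of G
  have hGentry : ∀ r s : Fin n, G r s = if (r : ℕ) ≤ (s : ℕ) then c ((s : ℕ) - (r : ℕ)) else 0 := by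
    intro r s
    rw [hG, Matrix.sum_apply]
    by_cases h : (r : ℕ) ≤ (s : ℕ)
    · have hmem : (s : ℕ) - (r : ℕ) ∈ Finset.range n := by
        rw [Finset.mem_range]; omega
      have : ∀ j ∈ Finset.range n, (c j • jb n ^ j) r s =
          if j = (s : ℕ) - (r : ℕ) then c ((s : ℕ) - (r : ℕ)) else 0 := by
        intro j _
        rw [Matrix.smul_apply, jb_pow_apply]
        by_cases hj : j = (s : ℕ) - (r : ℕ)
        · subst hj
          have : (s : ℕ) = (r : ℕ) + ((s : ℕ) - (r : ℕ)) := by omega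
          simp [← this]
        · have : (s : ℕ) ≠ (r : ℕ) + j := by omega
          simp [this, hj]
      rw [Finset.sum_congr rfl this, Finset.sum_ite_eq' _ ((s : ℕ) - (r : ℕ))]
      simp [hmem, h]
    · have : ∀ j ∈ Finset.range n, (c j • jb n ^ j) r s = 0 := by
        intro j _
        rw [Matrix.smul_apply, jb_pow_apply]
        have : (s : ℕ) ≠ (r : ℕ) + j := by omega
        simp [this]
      rw [Finset.sum_congr rfl this, Finset.sum_const_zero, if_neg h]
  -- G is invertible
  have hdiag : ∀ i : Fin n, G i i = c 0 := by
    intro i; rw [hGentry]; simp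
  have htri : G.BlockTriangular id := by
    intro i j hij
    rw [hGentry]
    have : ¬ ((i : ℕ) ≤ (j : ℕ)) := by exact not_le.mpr hij
    simp [this]
  have hdet : G.det = c 0 ^ n := by
    rw [Matrix.det_of_upperTriangular htri]
    simp [hdiag]
  have hunit : IsUnit G := by
    rw [Matrix.isUnit_iff_isUnit_det, hdet, isUnit_iff_ne_zero]
    exact pow_ne_zero _ hc0ne
  refine ⟨hunit.unit, ?_, ?_⟩
  · -- commutes with jb n
    rw [hunit.unit_spec, hG, Finset.sum_mul, Finset.mul_sum]
    refine Finset.sum_congr rfl fun j _ => ?_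
    rw [Matrix.smul_mul, Matrix.mul_smul, ← pow_succ, ← pow_succ']
  · -- G v = w
    rw [hunit.unit_spec]
    funext i
    have hmv : ∀ j : ℕ, ((jb n ^ j) *ᵥ v) i = v' ((i : ℕ) + j) := by
      intro j
      rw [jb_pow_mulVec, hv']
    have sum_mv : ((∑ j ∈ Finset.range n, c j • jb n ^ j) *ᵥ v) i =
        ∑ j ∈ Finset.range n, ((c j • jb n ^ j) *ᵥ v) i := by
      simp only [Matrix.mulVec, dotProduct, Matrix.sum_apply, Finset.sum_apply, Finset.sum_mul]
      rw [Finset.sum_comm]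
    have : (G *ᵥ v) i = ∑ j ∈ Finset.range n, c j * v' ((i : ℕ) + j) := by
      rw [hG, sum_mv]
      refine Finset.sum_congr rfl fun j _ => ?_
      rw [Matrix.smul_mulVec, Pi.smul_apply, hmv j, smul_eq_mul]
    rw [this]
    by_cases hik : (k : ℕ) < (i : ℕ)
    · have : ∀ j ∈ Finset.range n, c j * v' ((i : ℕ) + j) = 0 := by
        intro j _
        rw [hv't ((i : ℕ) + j) (by omega), mul_zero]
      rw [Finset.sum_congr rfl this, Finset.sum_const_zero, hwt i hik]
    · push_neg at hik
      set m : ℕ := (k : ℕ) - (i : ℕ) with hm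
      have him : (k : ℕ) - m = (i : ℕ) := by omega
      have hsub : Finset.range (m + 1) ⊆ Finset.range n := by
        intro x hx
        rw [Finset.mem_range] at *
        have := k.2
        omega
      have hout : ∀ j ∈ Finset.range n, j ∉ Finset.range (m + 1) →
          c j * v' ((i : ℕ) + j) = 0 := by
        intro j _ hj
        rw [Finset.mem_range] at hj
        rw [hv't ((i : ℕ) + j) (by omega), mul_zero]
      rw [← Finset.sum_subset hsub hout]
      have := coeffs_spec v' w' (k : ℕ) hv'ne m (by omega)
      rw [him] at this
      rw [this, hw']
      simp [i.2]

lemma orbit_eq (n : ℕ) (k : Fin n) (v : Fin n → ℂ)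
    (hvk : v k ≠ 0) (hvt : ∀ j : Fin n, (k : ℕ) < (j : ℕ) → v j = 0) :
    {w | ∃ g : GL (Fin n) ℂ,
        (↑g : Matrix (Fin n) (Fin n) ℂ) * jb n = jb n * (↑g : Matrix (Fin n) (Fin n) ℂ) ∧
        (↑g : Matrix (Fin n) (Fin n) ℂ) *ᵥ v = w}
      = {w | (jb n ^ (k : ℕ)) *ᵥ w ≠ 0 ∧ (jb n ^ ((k : ℕ) + 1)) *ᵥ w = 0} := by
  ext w
  simp only [Set.mem_setOf_eq]
  constructor
  · rintro ⟨g, hg, rfl⟩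
    have hv : (jb n ^ (k : ℕ)) *ᵥ v ≠ 0 ∧ (jb n ^ ((k : ℕ) + 1)) *ᵥ v = 0 :=
      (jb_mem_char n k v).mpr ⟨hvk, hvt⟩
    have key : ∀ m : ℕ, (jb n ^ m) *ᵥ ((↑g : Matrix (Fin n) (Fin n) ℂ) *ᵥ v)
        = (↑g : Matrix (Fin n) (Fin n) ℂ) *ᵥ ((jb n ^ m) *ᵥ v) := by
      intro m
      rw [Matrix.mulVec_mulVec, Matrix.mulVec_mulVec]
      have : Commute (↑g : Matrix (Fin n) (Fin n) ℂ) (jb n ^ m) :=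
        Commute.pow_right hg m
      rw [this]
    have ginj : ∀ u : Fin n → ℂ, (↑g : Matrix (Fin n) (Fin n) ℂ) *ᵥ u = 0 → u = 0 := by
      intro u hu
      have h1 : (↑(g⁻¹) : Matrix (Fin n) (Fin n) ℂ) *ᵥ
          ((↑g : Matrix (Fin n) (Fin n) ℂ) *ᵥ u) = u := by
        rw [Matrix.mulVec_mulVec, Units.inv_mul, Matrix.one_mulVec]
      rw [hu, Matrix.mulVec_zero] at h1
      exact h1.symm
    constructor
    · rw [key]
      intro h0
      exact hv.1 (ginj _ h0)
    · rw [key, hv.2, Matrix.mulVec_zero]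
  · intro hw
    obtain ⟨hwk, hwt⟩ := (jb_mem_char n k w).mp hw
    exact exists_g n k v w hvk hvt hwk hwt

lemma exists_top (n : ℕ) (v : Fin n → ℂ) (hv : v ≠ 0) :
    ∃ k : Fin n, v k ≠ 0 ∧ ∀ j : Fin n, (k : ℕ) < (j : ℕ) → v j = 0 := by
  classical
  set T := Finset.univ.filter (fun j : Fin n => v j ≠ 0) with hT
  have hTne : T.Nonempty := by
    rcases Function.ne_iff.mp hv with ⟨j, hj⟩
    exact ⟨j, by simp only [hT, Finset.mem_filter, Finset.mem_univ, true_and]; exact hj⟩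
  refine ⟨T.max' hTne, ?_, ?_⟩
  · have := T.max'_mem hTne
    simp only [hT, Finset.mem_filter, Finset.mem_univ, true_and] at this
    exact this
  · intro j hj
    by_contra hjv
    have hmem : j ∈ T := by
      simp only [hT, Finset.mem_filter, Finset.mem_univ, true_and]; exact hjv
    have := Finset.le_max' T j hmem
    rw [Fin.le_def] at this
    omega

theorem stmt2 (n : ℕ) (hn : 0 < n) (lam : ℂ) (X : Matrix (Fin n) (Fin n) ℂ)
    (hX : ∀ r s : Fin n, X r s =
      (if (s : ℕ) = (r : ℕ) + 1 then 1 else 0) + (if s = r then lam else 0)) :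
    ({O : Set (Fin n → ℂ) | ∃ v : Fin n → ℂ,
        O = {w | ∃ g : GL (Fin n) ℂ,
          (↑g : Matrix (Fin n) (Fin n) ℂ) * X = X * (↑g : Matrix (Fin n) (Fin n) ℂ) ∧
          (↑g : Matrix (Fin n) (Fin n) ℂ) *ᵥ v = w}}
      = insert {0} (Set.range (fun k : Fin n =>
          {v | ((X - lam • 1) ^ (k : ℕ)) *ᵥ v ≠ 0 ∧ ((X - lam • 1) ^ ((k : ℕ) + 1)) *ᵥ v = 0})))
    ∧ {O : Set (Fin n → ℂ) | ∃ v : Fin n → ℂ,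
        O = {w | ∃ g : GL (Fin n) ℂ,
          (↑g : Matrix (Fin n) (Fin n) ℂ) * X = X * (↑g : Matrix (Fin n) (Fin n) ℂ) ∧
          (↑g : Matrix (Fin n) (Fin n) ℂ) *ᵥ v = w}}.Finite := by
  have hJ : X - lam • 1 = jb n := by
    ext r s
    simp only [Matrix.sub_apply, Matrix.smul_apply, Matrix.one_apply, hX, jb, Matrix.of_apply,
      smul_eq_mul]
    by_cases h : s = r
    · subst h; simp
    · have h2 : ¬ (r = s) := fun h3 => h h3.symm
      simp [h, h2]
  have hXeq : X = jb n + lam • 1 := by rw [← hJ, sub_add_cancel]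
  have hcommiff : ∀ A : Matrix (Fin n) (Fin n) ℂ,
      (A * X = X * A) ↔ (A * jb n = jb n * A) := by
    intro A
    rw [hXeq, mul_add, add_mul, Matrix.mul_smul, Matrix.smul_mul, mul_one, one_mul,
      add_left_inj]
  have horb : ∀ v : Fin n → ℂ,
      {w | ∃ g : GL (Fin n) ℂ,
        (↑g : Matrix (Fin n) (Fin n) ℂ) * X = X * (↑g : Matrix (Fin n) (Fin n) ℂ) ∧
        (↑g : Matrix (Fin n) (Fin n) ℂ) *ᵥ v = w}
      = {w | ∃ g : GL (Fin n) ℂ,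
        (↑g : Matrix (Fin n) (Fin n) ℂ) * jb n = jb n * (↑g : Matrix (Fin n) (Fin n) ℂ) ∧
        (↑g : Matrix (Fin n) (Fin n) ℂ) *ᵥ v = w} := by
    intro v
    ext w
    exact exists_congr fun g => and_congr_left fun _ => hcommiff _
  have horb0 : {w | ∃ g : GL (Fin n) ℂ,
        (↑g : Matrix (Fin n) (Fin n) ℂ) * jb n = jb n * (↑g : Matrix (Fin n) (Fin n) ℂ) ∧
        (↑g : Matrix (Fin n) (Fin n) ℂ) *ᵥ (0 : Fin n → ℂ) = w} = {0} := by
    ext w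
    simp only [Set.mem_setOf_eq, Matrix.mulVec_zero, Set.mem_singleton_iff]
    constructor
    · rintro ⟨g, _, rfl⟩; rfl
    · rintro rfl
      exact ⟨1, by simp, rfl⟩
  have hmain : ({O : Set (Fin n → ℂ) | ∃ v : Fin n → ℂ,
        O = {w | ∃ g : GL (Fin n) ℂ,
          (↑g : Matrix (Fin n) (Fin n) ℂ) * X = X * (↑g : Matrix (Fin n) (Fin n) ℂ) ∧
          (↑g : Matrix (Fin n) (Fin n) ℂ) *ᵥ v = w}}
      = insert {0} (Set.range (fun k : Fin n =>
          {v | ((X - lam • 1) ^ (k : ℕ)) *ᵥ v ≠ 0 ∧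
            ((X - lam • 1) ^ ((k : ℕ) + 1)) *ᵥ v = 0}))) := by
    rw [hJ]
    ext O
    simp only [Set.mem_setOf_eq, Set.mem_insert_iff, Set.mem_range]
    constructor
    · rintro ⟨v, rfl⟩
      rw [horb v]
      by_cases hv0 : v = 0
      · subst hv0
        left
        exact horb0
      · obtain ⟨k, hk1, hk2⟩ := exists_top n v hv0
        right
        exact ⟨k, (orbit_eq n k v hk1 hk2).symm⟩
    · rintro (rfl | ⟨k, rfl⟩)
      · exact ⟨0, by rw [horb 0, horb0]⟩
      · refine ⟨fun j => if j = k then 1 else 0, ?_⟩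
        rw [horb]
        refine (orbit_eq n k (fun j => if j = k then 1 else 0) (by simp) ?_).symm
        intro j hj
        have : j ≠ k := by
          intro h; subst h; omega
        simp [this]
  exact ⟨hmain, hmain ▸ (Set.Finite.insert {0} (Set.finite_range _))⟩
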